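/- Every no-signaling behavior κ ∈ NS(d,d,m-1,m) admits a decomposition of its chain-relevant probabilities as a convex mixture κ(t, t-q'_{2i-1}|i,i) = Σ_l f(l)·F_l(t, t-q'_{2i-1}|i,i) and κ(t, t+q'_{2i-2}|i,i-1) = Σ_l f(l)·F_l(t, t+q'_{2i-2}|i,i-1), where l ranges over ℤ_d^{2m-2}, f(l) := Σ_t 𝓕^m_l(t) satisfies f(l) ≥ 0 and Σ_l f(l) = 1, and each F_l is a valid (normalized, nonnegative) behavior whose chain-relevant distributions are concentrated on outcome pairs with fixed differences given by l: F_l(a,b|i,i) = 0 unless a - b ≡ q_{2i-1} (mod d), and F_l(a,b|i,i-1) = 0 unless b - a ≡ q_{2i-2} (mod d). -/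

import Mathlib

open scoped BigOperators

noncomputable section

/-- The component `q_i` (for `i ∈ {2, ..., 2m-1}`) of the tuple
`l = (q_2, ..., q_{2m-1}) ∈ ℤ_d^{2m-2}` (coordinate `i-2` of `l`), and `0` otherwise. -/
def qOf (d m : ℕ) (l : Fin (2 * m - 2) → ZMod d) (i : ℕ) : ZMod d :=
  if h : i - 2 < 2 * m - 2 then l ⟨i - 2, h⟩ else 0

/-- `c_k = Σ_{i=3}^{2k-2} q_i` (so `c_2 = 0`). -/
def cOf (d m : ℕ) (l : Fin (2 * m - 2) → ZMod d) (k : ℕ) : ZMod d :=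
  ∑ i ∈ Finset.Icc 3 (2 * k - 2), qOf d m l i

/-- Alice's marginal `κ_A(a|x)` (computed with Bob's input `1`; for a no-signaling
behavior it is independent of Bob's input). -/
def margA (d : ℕ) [NeZero d] (κ : ℕ → ℕ → ZMod d → ZMod d → ℝ) (x : ℕ) (a : ZMod d) : ℝ :=
  ∑ b : ZMod d, κ x 1 a b

/-- Bob's marginal `κ_B(b|y)` (computed with Alice's input `2`). -/
def margB (d : ℕ) [NeZero d] (κ : ℕ → ℕ → ZMod d → ZMod d → ℝ) (y : ℕ) (b : ZMod d) : ℝ :=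
  ∑ a : ZMod d, κ 2 y a b

/-- The factor `g^k_l(t) = κ(t, t+q_{2k-2}|k,k-1)·κ(t, t-q_{2k-1}|k,k) /
(κ_B(t+q_{2k-2}|k-1)·κ_A(t|k))`, set to `0` whenever a denominator marginal vanishes. -/
def gFun (d m : ℕ) [NeZero d] (κ : ℕ → ℕ → ZMod d → ZMod d → ℝ)
    (l : Fin (2 * m - 2) → ZMod d) (k : ℕ) (t : ZMod d) : ℝ :=
  if margB d κ (k - 1) (t + qOf d m l (2 * k - 2)) = 0 ∨ margA d κ k t = 0 then 0
  else κ k (k - 1) t (t + qOf d m l (2 * k - 2)) * κ k k t (t - qOf d m l (2 * k - 1)) /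
    (margB d κ (k - 1) (t + qOf d m l (2 * k - 2)) * margA d κ k t)

/-- `𝓕^i_l(t) = κ_B(t+q_2|1)·Π_{k=2}^i g^k_l(t - c_k)`. -/
def FFun (d m : ℕ) [NeZero d] (κ : ℕ → ℕ → ZMod d → ZMod d → ℝ)
    (l : Fin (2 * m - 2) → ZMod d) (i : ℕ) (t : ZMod d) : ℝ :=
  margB d κ 1 (t + qOf d m l 2) *
    ∏ k ∈ Finset.Icc 2 i, gFun d m κ l k (t - cOf d m l k)

end
open Finset Function

section peel
variable {n : ℕ} {A : Type*} [Fintype A] [DecidableEq A]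

lemma sum_sum_update (p : Fin n) (Φ : (Fin n → A) → ℝ) :
    ∑ l : Fin n → A, ∑ v : A, Φ (Function.update l p v)
      = (Fintype.card A : ℝ) * ∑ l : Fin n → A, Φ l := by
  have hinv : Function.Involutive
      (fun q : (Fin n → A) × A => (Function.update q.1 p q.2, q.1 p)) := by
    rintro ⟨l, v⟩
    simp [Function.update_idem, Function.update_eq_self]
  calc ∑ l : Fin n → A, ∑ v : A, Φ (Function.update l p v)
      = ∑ q : (Fin n → A) × A, Φ (Function.update q.1 p q.2) := by
        rw [Fintype.sum_prod_type]
    _ = ∑ q : (Fin n → A) × A, Φ q.1 := by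
        exact Fintype.sum_bijective _ hinv.bijective _ _ (fun q => rfl)
    _ = (Fintype.card A : ℝ) * ∑ l : Fin n → A, Φ l := by
        rw [Fintype.sum_prod_type]
        simp [Finset.sum_const, mul_comm, Finset.mul_sum]

lemma peel (p : Fin n) (Φ Ψ : (Fin n → A) → ℝ)
    (h : ∀ l, ∑ v : A, Φ (Function.update l p v) = Ψ l) :
    ∑ l : Fin n → A, Ψ l = (Fintype.card A : ℝ) * ∑ l : Fin n → A, Φ l := by
  rw [← sum_sum_update p Φ]
  exact Finset.sum_congr rfl (fun l _ => (h l).symm)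

lemma ind_peel (p : Fin n) (v : A) (Θ : (Fin n → A) → ℝ) :
    ∑ l : Fin n → A, Θ (Function.update l p v)
      = (Fintype.card A : ℝ) * ∑ l : Fin n → A, (if l p = v then Θ l else 0) := by
  refine peel p _ _ (fun l => ?_)
  have : ∀ w : A, (if (Function.update l p w) p = v then Θ (Function.update l p w) else 0)
      = if w = v then Θ (Function.update l p w) else 0 := by
    intro w; simp
  rw [Finset.sum_congr rfl (fun w _ => this w)]
  simp

end peel

section shift
variable {d : ℕ} [NeZero d]

lemma sum_shift (c : ZMod d) (h : ZMod d → ℝ) : ∑ v : ZMod d, h (c + v) = ∑ b : ZMod d, h b :=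
  Fintype.sum_equiv (Equiv.addLeft c) _ _ (fun v => rfl)

lemma sum_shift_r (c : ZMod d) (h : ZMod d → ℝ) :
    ∑ v : ZMod d, h (v + c) = ∑ b : ZMod d, h b :=
  Fintype.sum_equiv (Equiv.addRight c) _ _ (fun v => rfl)

lemma sum_shift_sub (c : ZMod d) (h : ZMod d → ℝ) : ∑ v : ZMod d, h (c - v) = ∑ b : ZMod d, h b :=
  Fintype.sum_equiv (Equiv.subLeft c) _ _ (fun v => rfl)

end shift

section basics
variable {d m : ℕ} [NeZero d] {κ : ℕ → ℕ → ZMod d → ZMod d → ℝ}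
variable (hm : 2 ≤ m)
variable (hpos : ∀ x y, 2 ≤ x → x ≤ m → 1 ≤ y → y ≤ m → ∀ a b, 0 ≤ κ x y a b)
variable (hnorm : ∀ x y, 2 ≤ x → x ≤ m → 1 ≤ y → y ≤ m →
      ∑ a : ZMod d, ∑ b : ZMod d, κ x y a b = 1)
variable (hnsA : ∀ x y y', 2 ≤ x → x ≤ m → 1 ≤ y → y ≤ m → 1 ≤ y' → y' ≤ m → ∀ a,
      ∑ b : ZMod d, κ x y a b = ∑ b : ZMod d, κ x y' a b)
variable (hnsB : ∀ x x' y, 2 ≤ x → x ≤ m → 2 ≤ x' → x' ≤ m → 1 ≤ y → y ≤ m → ∀ b,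
      ∑ a : ZMod d, κ x y a b = ∑ a : ZMod d, κ x' y a b)

include hm hpos in
lemma margA_nonneg {x : ℕ} (hx2 : 2 ≤ x) (hxm : x ≤ m) (a : ZMod d) : 0 ≤ margA d κ x a :=
  Finset.sum_nonneg fun b _ => hpos x 1 hx2 hxm le_rfl (by omega) a b

include hm hpos in
lemma margB_nonneg {y : ℕ} (hy1 : 1 ≤ y) (hym : y ≤ m) (b : ZMod d) : 0 ≤ margB d κ y b :=
  Finset.sum_nonneg fun a _ => hpos 2 y le_rfl hm hy1 hym a b

include hm hnsA in
lemma sum_row {x y : ℕ} (hx2 : 2 ≤ x) (hxm : x ≤ m) (hy1 : 1 ≤ y) (hym : y ≤ m) (a : ZMod d) :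
    ∑ b : ZMod d, κ x y a b = margA d κ x a :=
  hnsA x y 1 hx2 hxm hy1 hym le_rfl (by omega) a

include hm hnsB in
lemma sum_col {x y : ℕ} (hx2 : 2 ≤ x) (hxm : x ≤ m) (hy1 : 1 ≤ y) (hym : y ≤ m) (b : ZMod d) :
    ∑ a : ZMod d, κ x y a b = margB d κ y b :=
  hnsB x 2 y hx2 hxm le_rfl hm hy1 hym b

include hm hpos hnsA in
lemma row_zero {x y : ℕ} (hx2 : 2 ≤ x) (hxm : x ≤ m) (hy1 : 1 ≤ y) (hym : y ≤ m)
    {a : ZMod d} (ha : margA d κ x a = 0) (b : ZMod d) : κ x y a b = 0 := by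
  have h0 := sum_row hm hnsA hx2 hxm hy1 hym a
  rw [ha] at h0
  exact (Finset.sum_eq_zero_iff_of_nonneg
    (fun c _ => hpos x y hx2 hxm hy1 hym a c)).mp h0 b (Finset.mem_univ b)

include hm hpos hnsB in
lemma col_zero {x y : ℕ} (hx2 : 2 ≤ x) (hxm : x ≤ m) (hy1 : 1 ≤ y) (hym : y ≤ m)
    {b : ZMod d} (hb : margB d κ y b = 0) (a : ZMod d) : κ x y a b = 0 := by
  have h0 := sum_col hm hnsB hx2 hxm hy1 hym b
  rw [hb] at h0
  exact (Finset.sum_eq_zero_iff_of_nonneg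
    (fun c _ => hpos x y hx2 hxm hy1 hym c b)).mp h0 a (Finset.mem_univ a)

-- qOf / cOf update lemmas
lemma qOf_update_self {p : Fin (2*m-2)} {i : ℕ} (h : i - 2 = (p : ℕ)) (l : Fin (2*m-2) → ZMod d)
    (v : ZMod d) : qOf d m (Function.update l p v) i = v := by
  unfold qOf
  rw [dif_pos (h ▸ p.isLt)]
  have : (⟨i - 2, h ▸ p.isLt⟩ : Fin (2*m-2)) = p := Fin.ext h
  rw [this, Function.update_self]

lemma qOf_update_ne {p : Fin (2*m-2)} {i : ℕ} (h : i - 2 ≠ (p : ℕ)) (l : Fin (2*m-2) → ZMod d)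
    (v : ZMod d) : qOf d m (Function.update l p v) i = qOf d m l i := by
  unfold qOf
  split_ifs with hlt
  · rw [Function.update_of_ne (fun hc => h (by simpa using congrArg Fin.val hc))]
  · rfl

lemma cOf_update_ne {p : Fin (2*m-2)} {k : ℕ} (h : ∀ i, 3 ≤ i → i ≤ 2*k-2 → i - 2 ≠ (p : ℕ))
    (l : Fin (2*m-2) → ZMod d) (v : ZMod d) :
    cOf d m (Function.update l p v) k = cOf d m l k := by
  unfold cOf
  refine Finset.sum_congr rfl (fun i hi => ?_)
  rw [Finset.mem_Icc] at hi
  exact qOf_update_ne (h i hi.1 hi.2) l v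

lemma cOf_split {k : ℕ} (hk : 3 ≤ k) (l : Fin (2*m-2) → ZMod d) :
    cOf d m l k = cOf d m l (k-1) + qOf d m l (2*k-3) + qOf d m l (2*k-2) := by
  unfold cOf
  have h1 : 2*k-2 = (2*k-3) + 1 := by omega
  have h2 : 2*k-3 = (2*k-4) + 1 := by omega
  have h3 : 2*(k-1)-2 = 2*k-4 := by omega
  rw [h1, Finset.sum_Icc_succ_top (by omega), h2, Finset.sum_Icc_succ_top (by omega), h3]




include hm hpos hnsA hnsB in
lemma gFun_eq {k : ℕ} (hk2 : 2 ≤ k) (hkm : k ≤ m) (l : Fin (2*m-2) → ZMod d) (t : ZMod d) :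
    gFun d m κ l k t = κ k (k-1) t (t + qOf d m l (2*k-2)) * κ k k t (t - qOf d m l (2*k-1)) /
      (margB d κ (k-1) (t + qOf d m l (2*k-2)) * margA d κ k t) := by
  unfold gFun
  split_ifs with h
  · rcases h with h | h
    · rw [col_zero hm hpos hnsB hk2 hkm (by omega) (by omega) h]
      simp
    · rw [row_zero hm hpos hnsA hk2 hkm (by omega) hkm h]
      simp
  · rfl

include hm hpos in
lemma gFun_nonneg {k : ℕ} (hk2 : 2 ≤ k) (hkm : k ≤ m) (l : Fin (2*m-2) → ZMod d) (t : ZMod d) :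
    0 ≤ gFun d m κ l k t := by
  unfold gFun
  split_ifs with h
  · exact le_refl 0
  · exact div_nonneg
      (mul_nonneg (hpos k (k-1) hk2 hkm (by omega) (by omega) _ _)
        (hpos k k hk2 hkm (by omega) hkm _ _))
      (mul_nonneg (margB_nonneg hm hpos (by omega) (by omega) _)
        (margA_nonneg hm hpos hk2 hkm _))

lemma gFun_update {k : ℕ} {p : Fin (2*m-2)} (hk2 : 2 ≤ k) (hp : 2*k-2 ≤ (p:ℕ))
    (l : Fin (2*m-2) → ZMod d) (v : ZMod d) (t : ZMod d) :
    gFun d m κ (Function.update l p v) k t = gFun d m κ l k t := by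
  unfold gFun
  rw [qOf_update_ne (i := 2*k-2) (by omega), qOf_update_ne (i := 2*k-1) (by omega)]

lemma FFun_succ {i : ℕ} (hi : 1 ≤ i) (l : Fin (2*m-2) → ZMod d) (t : ZMod d) :
    FFun d m κ l (i+1) t = FFun d m κ l i t * gFun d m κ l (i+1) (t - cOf d m l (i+1)) := by
  unfold FFun
  rw [Finset.prod_Icc_succ_top (by omega)]
  ring

lemma FFun_peel_top {k : ℕ} (hk2 : 2 ≤ k) (l : Fin (2*m-2) → ZMod d) (t : ZMod d) :
    FFun d m κ l k t = FFun d m κ l (k-1) t * gFun d m κ l k (t - cOf d m l k) := by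
  obtain ⟨j, rfl⟩ : ∃ j, k = j+1 := ⟨k-1, by omega⟩
  rw [FFun_succ (by omega)]
  simp

lemma FFun_one (l : Fin (2*m-2) → ZMod d) (t : ZMod d) :
    FFun d m κ l 1 t = margB d κ 1 (t + qOf d m l 2) := by
  unfold FFun
  rw [Finset.Icc_eq_empty (by omega)]
  simp

lemma FFun_update {i : ℕ} {p : Fin (2*m-2)} (hp0 : 0 < (p:ℕ)) (hp : 2*i-2 ≤ (p:ℕ))
    (l : Fin (2*m-2) → ZMod d) (v : ZMod d) (t : ZMod d) :
    FFun d m κ (Function.update l p v) i t = FFun d m κ l i t := by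
  unfold FFun
  rw [qOf_update_ne (by omega)]
  congr 1
  refine Finset.prod_congr rfl (fun k hk => ?_)
  rw [Finset.mem_Icc] at hk
  rw [cOf_update_ne (fun j hj1 hj2 => by omega), gFun_update (by omega) (by omega)]

include hm hpos in
lemma FFun_nonneg {i : ℕ} (him : i ≤ m) (l : Fin (2*m-2) → ZMod d) (t : ZMod d) :
    0 ≤ FFun d m κ l i t := by
  refine mul_nonneg (margB_nonneg hm hpos le_rfl (by omega) _) (Finset.prod_nonneg ?_)
  intro k hk
  rw [Finset.mem_Icc] at hk
  exact gFun_nonneg hm hpos hk.1 (le_trans hk.2 him) _ _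

include hm hpos hnsA hnsB in
lemma FFun_vanish {k : ℕ} (hk2 : 2 ≤ k) (hkm : k ≤ m) (l : Fin (2*m-2) → ZMod d) (t : ZMod d)
    (h : margB d κ k (t - cOf d m l k - qOf d m l (2*k-1)) = 0) :
    FFun d m κ l k t = 0 := by
  rw [FFun_peel_top hk2, gFun_eq hm hpos hnsA hnsB hk2 hkm,
    col_zero hm hpos hnsB hk2 hkm (by omega) hkm h]
  simp

include hm hpos hnsA hnsB in
lemma L1 {j : ℕ} (hj2 : 2 ≤ j) (hjm : j ≤ m) {p : Fin (2*m-2)} (hp : (p:ℕ) = 2*j-3)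
    (l : Fin (2*m-2) → ZMod d) (t : ZMod d) :
    ∑ v : ZMod d, FFun d m κ (Function.update l p v) j t
      = FFun d m κ l (j-1) t *
        (κ j (j-1) (t - cOf d m l j) (t - cOf d m l j + qOf d m l (2*j-2)) /
          margB d κ (j-1) (t - cOf d m l j + qOf d m l (2*j-2))) := by
  set s := t - cOf d m l j with hs
  set q := qOf d m l (2*j-2) with hq
  have e : ∀ v : ZMod d, FFun d m κ (Function.update l p v) j t
      = (FFun d m κ l (j-1) t * κ j (j-1) s (s + q) /
          (margB d κ (j-1) (s + q) * margA d κ j s)) * κ j j s (s - v) := by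
    intro v
    rw [FFun_peel_top hj2, FFun_update (by omega) (by omega),
      cOf_update_ne (fun i hi1 hi2 => by omega), gFun_eq hm hpos hnsA hnsB hj2 hjm,
      qOf_update_ne (i := 2*j-2) (by omega), qOf_update_self (i := 2*j-1) (by omega)]
    rw [← hs, ← hq]
    ring
  rw [Finset.sum_congr rfl (fun v _ => e v), ← Finset.mul_sum]
  have hsum : ∑ v : ZMod d, κ j j s (s - v) = margA d κ j s := by
    rw [sum_shift_sub s (fun b => κ j j s b)]
    exact sum_row hm hnsA hj2 hjm (by omega) hjm s
  rw [hsum]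
  by_cases hA : margA d κ j s = 0
  · rw [row_zero hm hpos hnsA hj2 hjm (by omega) (by omega) hA (s + q)]
    simp
  · by_cases hB : margB d κ (j-1) (s + q) = 0
    · rw [hB]
      simp
    · field_simp

include hm hpos hnsA hnsB in
lemma L2 {j : ℕ} (hj3 : 3 ≤ j) (hjm : j ≤ m) {p : Fin (2*m-2)} (hp : (p:ℕ) = 2*j-4)
    (l : Fin (2*m-2) → ZMod d) (t : ZMod d) :
    ∑ v : ZMod d, (FFun d m κ (Function.update l p v) (j-1) t *
      (κ j (j-1) (t - cOf d m (Function.update l p v) j)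
         (t - cOf d m (Function.update l p v) j + qOf d m (Function.update l p v) (2*j-2)) /
        margB d κ (j-1)
          (t - cOf d m (Function.update l p v) j + qOf d m (Function.update l p v) (2*j-2))))
      = FFun d m κ l (j-1) t := by
  set β := t - cOf d m l (j-1) - qOf d m l (2*j-3) with hβ
  have e : ∀ v : ZMod d, (FFun d m κ (Function.update l p v) (j-1) t *
      (κ j (j-1) (t - cOf d m (Function.update l p v) j)
         (t - cOf d m (Function.update l p v) j + qOf d m (Function.update l p v) (2*j-2)) /
        margB d κ (j-1)
          (t - cOf d m (Function.update l p v) j + qOf d m (Function.update l p v) (2*j-2))))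
      = FFun d m κ l (j-1) t * (κ j (j-1) (β - v) β / margB d κ (j-1) β) := by
    intro v
    have hc : cOf d m (Function.update l p v) j
        = cOf d m l (j-1) + qOf d m l (2*j-3) + v := by
      rw [cOf_split hj3, cOf_update_ne (fun i hi1 hi2 => by omega),
        qOf_update_ne (i := 2*j-3) (by omega), qOf_update_self (i := 2*j-2) (by omega)]
    have harg : t - cOf d m (Function.update l p v) j = β - v := by
      rw [hc, hβ]; ring
    have harg2 : t - cOf d m (Function.update l p v) j
        + qOf d m (Function.update l p v) (2*j-2) = β := by
      rw [harg, qOf_update_self (i := 2*j-2) (by omega)]; ring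
    rw [FFun_update (by omega) (by omega), harg2, harg]
  rw [Finset.sum_congr rfl (fun v _ => e v), ← Finset.mul_sum, ← Finset.sum_div]
  have hsum : ∑ v : ZMod d, κ j (j-1) (β - v) β = margB d κ (j-1) β := by
    rw [sum_shift_sub β (fun a => κ j (j-1) a β)]
    exact sum_col hm hnsB (by omega) hjm (by omega) (by omega) β
  rw [hsum]
  by_cases hB : margB d κ (j-1) β = 0
  · have h0 : FFun d m κ l (j-1) t = 0 := by
      apply FFun_vanish hm hpos hnsA hnsB (by omega) (by omega)
      have e1 : 2*(j-1)-1 = 2*j-3 := by omega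
      rw [e1, ← hβ]
      exact hB
    rw [h0, hB]
    simp
  · rw [div_self hB, mul_one]

include hm hpos hnsA hnsB in
lemma one_step {j : ℕ} (hj2 : 2 ≤ j) (hjm : j + 1 ≤ m)
    (χ : (Fin (2*m-2) → ZMod d) → ZMod d)
    (σ : (Fin (2*m-2) → ZMod d) → (Fin (2*m-2) → ZMod d))
    (W : (Fin (2*m-2) → ZMod d) → ℝ)
    (hσ : ∀ l (p : Fin (2*m-2)) w, 2*j-2 ≤ (p:ℕ) →
      σ (Function.update l p w) = Function.update (σ l) p w)
    (hχ : ∀ l (p : Fin (2*m-2)) w, 2*j-2 ≤ (p:ℕ) → χ (Function.update l p w) = χ l)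
    (hW : ∀ l (p : Fin (2*m-2)) w, 2*j-2 ≤ (p:ℕ) → W (Function.update l p w) = W l) :
    ∑ l : Fin (2*m-2) → ZMod d, FFun d m κ (σ l) j (χ l) * W l
      = (d:ℝ)^2 * ∑ l : Fin (2*m-2) → ZMod d, FFun d m κ (σ l) (j+1) (χ l) * W l := by
  have hd0 : (Fintype.card (ZMod d) : ℝ) = (d:ℝ) := by rw [ZMod.card]
  have hp1lt : 2*j-1 < 2*m-2 := by omega
  have hp2lt : 2*j-2 < 2*m-2 := by omega
  set p₁ : Fin (2*m-2) := ⟨2*j-1, hp1lt⟩ with hp₁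
  set p₂ : Fin (2*m-2) := ⟨2*j-2, hp2lt⟩ with hp₂
  set Ψ₁ : (Fin (2*m-2) → ZMod d) → ℝ := fun l =>
    (FFun d m κ (σ l) j (χ l) *
      (κ (j+1) j (χ l - cOf d m (σ l) (j+1))
          (χ l - cOf d m (σ l) (j+1) + qOf d m (σ l) (2*(j+1)-2)) /
        margB d κ j
          (χ l - cOf d m (σ l) (j+1) + qOf d m (σ l) (2*(j+1)-2)))) * W l with hΨ₁
  have step1 : ∑ l : Fin (2*m-2) → ZMod d, Ψ₁ l
      = (d:ℝ) * ∑ l : Fin (2*m-2) → ZMod d, FFun d m κ (σ l) (j+1) (χ l) * W l := by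
    rw [← hd0]
    refine peel p₁ _ _ (fun l => ?_)
    have e : ∀ v : ZMod d, FFun d m κ (σ (Function.update l p₁ v)) (j+1)
          (χ (Function.update l p₁ v)) * W (Function.update l p₁ v)
        = FFun d m κ (Function.update (σ l) p₁ v) (j+1) (χ l) * W l := by
      intro v
      rw [hσ l p₁ v (by simp [hp₁]; omega), hχ l p₁ v (by simp [hp₁]; omega),
        hW l p₁ v (by simp [hp₁]; omega)]
    rw [Finset.sum_congr rfl (fun v _ => e v), ← Finset.sum_mul]
    have hL1 := L1 hm hpos hnsA hnsB (j := j+1) (by omega) hjm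
      (p := p₁) (by simp [hp₁]; omega) (σ l) (χ l)
    rw [hL1]
    rfl
  have step2 : ∑ l : Fin (2*m-2) → ZMod d, FFun d m κ (σ l) j (χ l) * W l
      = (d:ℝ) * ∑ l : Fin (2*m-2) → ZMod d, Ψ₁ l := by
    rw [← hd0]
    refine peel p₂ _ _ (fun l => ?_)
    have e : ∀ v : ZMod d, Ψ₁ (Function.update l p₂ v)
        = (FFun d m κ (Function.update (σ l) p₂ v) j (χ l) *
          (κ (j+1) j (χ l - cOf d m (Function.update (σ l) p₂ v) (j+1))
              (χ l - cOf d m (Function.update (σ l) p₂ v) (j+1)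
                + qOf d m (Function.update (σ l) p₂ v) (2*(j+1)-2)) /
            margB d κ j
              (χ l - cOf d m (Function.update (σ l) p₂ v) (j+1)
                + qOf d m (Function.update (σ l) p₂ v) (2*(j+1)-2)))) * W l := by
      intro v
      rw [hΨ₁]
      simp only []
      rw [hσ l p₂ v (by simp [hp₂]), hχ l p₂ v (by simp [hp₂]), hW l p₂ v (by simp [hp₂])]
    rw [Finset.sum_congr rfl (fun v _ => e v), ← Finset.sum_mul]
    have hL2 := L2 hm hpos hnsA hnsB (j := j+1) (by omega) hjm
      (p := p₂) (by simp [hp₂]; omega) (σ l) (χ l)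
    have h1 : (j+1) - 1 = j := rfl
    rw [h1] at hL2
    rw [hL2]
  rw [step2, step1]
  ring

include hm hpos hnsB in
lemma margB_cancel {x y : ℕ} (hx2 : 2 ≤ x) (hxm : x ≤ m) (hy1 : 1 ≤ y) (hym : y ≤ m)
    (a b : ZMod d) :
    margB d κ y b * (κ x y a b / margB d κ y b) = κ x y a b := by
  by_cases hB : margB d κ y b = 0
  · rw [hB, col_zero hm hpos hnsB hx2 hxm hy1 hym hB a]
    simp
  · field_simp

include hm hpos hnsA in
lemma margA_cancel {x y : ℕ} (hx2 : 2 ≤ x) (hxm : x ≤ m) (hy1 : 1 ≤ y) (hym : y ≤ m)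
    (a b : ZMod d) :
    margA d κ x a * (κ x y a b / margA d κ x a) = κ x y a b := by
  by_cases hA : margA d κ x a = 0
  · rw [hA, row_zero hm hpos hnsA hx2 hxm hy1 hym hA b]
    simp
  · field_simp

lemma cOf_two (l : Fin (2*m-2) → ZMod d) : cOf d m l 2 = 0 := by
  unfold cOf
  rw [Finset.Icc_eq_empty (by omega)]
  simp

include hm hpos hnsA hnsB in
lemma Hdown {i : ℕ} (hi2 : 2 ≤ i)
    (χ : (Fin (2*m-2) → ZMod d) → ZMod d)
    (σ : (Fin (2*m-2) → ZMod d) → (Fin (2*m-2) → ZMod d))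
    (W : (Fin (2*m-2) → ZMod d) → ℝ)
    (hσ : ∀ l (p : Fin (2*m-2)) w, 2*i-2 ≤ (p:ℕ) →
      σ (Function.update l p w) = Function.update (σ l) p w)
    (hχ : ∀ l (p : Fin (2*m-2)) w, 2*i-2 ≤ (p:ℕ) → χ (Function.update l p w) = χ l)
    (hW : ∀ l (p : Fin (2*m-2)) w, 2*i-2 ≤ (p:ℕ) → W (Function.update l p w) = W l) :
    ∀ j, i ≤ j → j ≤ m →
    ∑ l : Fin (2*m-2) → ZMod d, FFun d m κ (σ l) i (χ l) * W l
      = (d:ℝ)^(2*(j-i)) * ∑ l : Fin (2*m-2) → ZMod d, FFun d m κ (σ l) j (χ l) * W l := by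
  intro j
  refine Nat.le_induction ?_ ?_ j
  · intro _
    simp
  · intro n hn ih hnm
    rw [ih (by omega)]
    rw [one_step hm hpos hnsA hnsB (by omega) (by omega) χ σ W
      (fun l p w hp => hσ l p w (by omega)) (fun l p w hp => hχ l p w (by omega))
      (fun l p w hp => hW l p w (by omega))]
    rw [show 2*(n+1-i) = 2*(n-i) + 2 from by omega, pow_add]
    ring

include hm hpos hnsA hnsB in
lemma Uup : ∀ j, 2 ≤ j → j ≤ m →
    ∀ (χ : (Fin (2*m-2) → ZMod d) → ZMod d) (W : (Fin (2*m-2) → ZMod d) → ℝ),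
    (∀ l (p : Fin (2*m-2)) v, (p:ℕ) < 2*j-3 → χ (Function.update l p v) = χ l) →
    (∀ l (p : Fin (2*m-2)) v, (p:ℕ) < 2*j-3 → W (Function.update l p v) = W l) →
    ∑ l : Fin (2*m-2) → ZMod d, margA d κ j (χ l) * W l
      = (d:ℝ)^(2*j-3) * ∑ l : Fin (2*m-2) → ZMod d,
          FFun d m κ l (j-1) (χ l + cOf d m l j) *
          (κ j (j-1) (χ l) (χ l + qOf d m l (2*j-2)) /
            margB d κ (j-1) (χ l + qOf d m l (2*j-2))) * W l := by
  have hd0 : (Fintype.card (ZMod d) : ℝ) = (d:ℝ) := by rw [ZMod.card]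
  refine Nat.le_induction ?_ ?_
  · -- base case j = 2
    intro _ χ W hχ hW
    norm_num
    rw [← hd0]
    refine peel ⟨0, by omega⟩ _ _ (fun l => ?_)
    have e : ∀ v : ZMod d,
        FFun d m κ (Function.update l ⟨0, by omega⟩ v) 1
            (χ (Function.update l ⟨0, by omega⟩ v)
              + cOf d m (Function.update l ⟨0, by omega⟩ v) 2) *
          (κ 2 1 (χ (Function.update l ⟨0, by omega⟩ v))
              (χ (Function.update l ⟨0, by omega⟩ v)
                + qOf d m (Function.update l ⟨0, by omega⟩ v) 2) /
            margB d κ 1 (χ (Function.update l ⟨0, by omega⟩ v)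
                + qOf d m (Function.update l ⟨0, by omega⟩ v) 2)) *
          W (Function.update l ⟨0, by omega⟩ v)
        = κ 2 1 (χ l) (χ l + v) * W l := by
      intro v
      rw [hχ l _ v (by simp only [Fin.val_mk]; try omega), hW l _ v (by simp only [Fin.val_mk]; try omega), cOf_two, FFun_one,
        qOf_update_self (by simp only [Fin.val_mk]; try omega), add_zero,
        margB_cancel hm hpos hnsB le_rfl hm le_rfl (by omega)]
    rw [Finset.sum_congr rfl (fun v _ => e v), ← Finset.sum_mul]
    rw [sum_shift (χ l) (fun b => κ 2 1 (χ l) b)]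
    rfl
  · -- inductive step
    intro n hn2 ih hn1m χ W hχ hW
    simp only [show 2*(n+1)-3 = 2*n-1 from by omega, show 2*(n+1)-2 = 2*n from by omega,
      show (n+1)-1 = n from rfl]
    have hχ' : ∀ l (p : Fin (2*m-2)) v, (p:ℕ) < 2*n-1 → χ (Function.update l p v) = χ l := hχ
    have hW' : ∀ l (p : Fin (2*m-2)) v, (p:ℕ) < 2*n-1 → W (Function.update l p v) = W l := hW
    set w : (Fin (2*m-2) → ZMod d) → ZMod d :=
      fun l => χ l + qOf d m l (2*n-1) + qOf d m l (2*n) with hwdef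
    set W' : (Fin (2*m-2) → ZMod d) → ℝ := fun l =>
      (κ n n (w l) (χ l + qOf d m l (2*n)) / margA d κ n (w l)) *
        ((κ (n+1) n (χ l) (χ l + qOf d m l (2*n)) /
            margB d κ n (χ l + qOf d m l (2*n))) * W l) with hW'def
    have hq2n : ∀ l (p : Fin (2*m-2)) v, (p:ℕ) < 2*n-2 →
        qOf d m (Function.update l p v) (2*n) = qOf d m l (2*n) := by
      intro l p v hp
      exact qOf_update_ne (by omega) l v
    have hwinv : ∀ l (p : Fin (2*m-2)) v, (p:ℕ) < 2*n-3 →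
        w (Function.update l p v) = w l := by
      intro l p v hp
      rw [hwdef]
      simp only []
      rw [hχ' l p v (by omega), qOf_update_ne (by omega), qOf_update_ne (by omega)]
    have hW'inv : ∀ l (p : Fin (2*m-2)) v, (p:ℕ) < 2*n-3 →
        W' (Function.update l p v) = W' l := by
      intro l p v hp
      rw [hW'def]
      simp only []
      rw [hχ' l p v (by omega), hW' l p v (by omega), hwinv l p v hp,
        qOf_update_ne (by omega)]
    have claimA : ∀ l : Fin (2*m-2) → ZMod d,
        FFun d m κ l n (χ l + cOf d m l (n+1)) *
          (κ (n+1) n (χ l) (χ l + qOf d m l (2*n)) /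
            margB d κ n (χ l + qOf d m l (2*n))) * W l
        = FFun d m κ l (n-1) (w l + cOf d m l n) *
          (κ n (n-1) (w l) (w l + qOf d m l (2*n-2)) /
            margB d κ (n-1) (w l + qOf d m l (2*n-2))) * W' l := by
      intro l
      have hsplit : cOf d m l (n+1) = cOf d m l n + qOf d m l (2*n-1) + qOf d m l (2*n) := by
        have h := cOf_split (k := n+1) (by omega) l
        simpa [show 2*(n+1)-3 = 2*n-1 from by omega, show 2*(n+1)-2 = 2*n from by omega,
          show (n+1)-1 = n from rfl] using h
      have h1 : χ l + cOf d m l (n+1) = w l + cOf d m l n := by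
        rw [hsplit, hwdef]; ring
      have h2 : χ l + cOf d m l (n+1) - cOf d m l n = w l := by rw [h1]; ring
      have h3 : w l - qOf d m l (2*n-1) = χ l + qOf d m l (2*n) := by
        rw [hwdef]; simp only []; ring
      rw [FFun_peel_top (k := n) (by omega), h2,
        gFun_eq hm hpos hnsA hnsB (by omega) (by omega), h3, h1, hW'def]
      ring
    have hIH := ih (by omega) w W' hwinv hW'inv
    rw [← Finset.sum_congr rfl (fun l _ => claimA l)] at hIH
    have hΨ : ∀ l : Fin (2*m-2) → ZMod d, margA d κ n (w l) * W' l
        = κ n n (w l) (χ l + qOf d m l (2*n)) *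
          ((κ (n+1) n (χ l) (χ l + qOf d m l (2*n)) /
              margB d κ n (χ l + qOf d m l (2*n))) * W l) := by
      intro l
      rw [hW'def]
      simp only []
      rw [← mul_assoc, margA_cancel hm hpos hnsA (by omega) (by omega) (by omega) (by omega)]
    rw [Finset.sum_congr rfl (fun l _ => hΨ l)] at hIH
    have peel1 : ∑ l : Fin (2*m-2) → ZMod d,
        κ (n+1) n (χ l) (χ l + qOf d m l (2*n)) * W l
        = (d:ℝ) * ∑ l : Fin (2*m-2) → ZMod d,
            κ n n (w l) (χ l + qOf d m l (2*n)) *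
            ((κ (n+1) n (χ l) (χ l + qOf d m l (2*n)) /
                margB d κ n (χ l + qOf d m l (2*n))) * W l) := by
      rw [← hd0]
      refine peel ⟨2*n-3, by omega⟩ _ _ (fun l => ?_)
      have e : ∀ v : ZMod d,
          κ n n (w (Function.update l ⟨2*n-3, by omega⟩ v))
              (χ (Function.update l ⟨2*n-3, by omega⟩ v)
                + qOf d m (Function.update l ⟨2*n-3, by omega⟩ v) (2*n)) *
            ((κ (n+1) n (χ (Function.update l ⟨2*n-3, by omega⟩ v))
                (χ (Function.update l ⟨2*n-3, by omega⟩ v)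
                  + qOf d m (Function.update l ⟨2*n-3, by omega⟩ v) (2*n)) /
              margB d κ n (χ (Function.update l ⟨2*n-3, by omega⟩ v)
                  + qOf d m (Function.update l ⟨2*n-3, by omega⟩ v) (2*n))) *
              W (Function.update l ⟨2*n-3, by omega⟩ v))
          = κ n n ((χ l + qOf d m l (2*n)) + v) (χ l + qOf d m l (2*n)) *
            ((κ (n+1) n (χ l) (χ l + qOf d m l (2*n)) /
                margB d κ n (χ l + qOf d m l (2*n))) * W l) := by
        intro v
        have hwv : w (Function.update l ⟨2*n-3, by omega⟩ v)
            = (χ l + qOf d m l (2*n)) + v := by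
          rw [hwdef]
          simp only []
          rw [hχ' l _ v (by simp only [Fin.val_mk]; try omega), qOf_update_self (by simp only [Fin.val_mk]; try omega),
            qOf_update_ne (by simp only [Fin.val_mk]; try omega)]
          ring
        rw [hwv, hχ' l _ v (by simp only [Fin.val_mk]; try omega), hW' l _ v (by simp only [Fin.val_mk]; try omega),
          qOf_update_ne (by simp only [Fin.val_mk]; try omega)]
      rw [Finset.sum_congr rfl (fun v _ => e v), ← Finset.sum_mul]
      rw [sum_shift (χ l + qOf d m l (2*n)) (fun a => κ n n a (χ l + qOf d m l (2*n)))]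
      rw [sum_col hm hnsB (by omega) (by omega) (by omega) (by omega)]
      rw [← mul_assoc, margB_cancel hm hpos hnsB (by omega) (by omega) (by omega) (by omega)]
    have peel2 : ∑ l : Fin (2*m-2) → ZMod d, margA d κ (n+1) (χ l) * W l
        = (d:ℝ) * ∑ l : Fin (2*m-2) → ZMod d,
            κ (n+1) n (χ l) (χ l + qOf d m l (2*n)) * W l := by
      rw [← hd0]
      refine peel ⟨2*n-2, by omega⟩ _ _ (fun l => ?_)
      have e : ∀ v : ZMod d,
          κ (n+1) n (χ (Function.update l ⟨2*n-2, by omega⟩ v))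
              (χ (Function.update l ⟨2*n-2, by omega⟩ v)
                + qOf d m (Function.update l ⟨2*n-2, by omega⟩ v) (2*n)) *
            W (Function.update l ⟨2*n-2, by omega⟩ v)
          = κ (n+1) n (χ l) (χ l + v) * W l := by
        intro v
        rw [hχ' l _ v (by simp only [Fin.val_mk]; try omega), hW' l _ v (by simp only [Fin.val_mk]; try omega),
          qOf_update_self (by simp only [Fin.val_mk]; try omega)]
      rw [Finset.sum_congr rfl (fun v _ => e v), ← Finset.sum_mul]
      rw [sum_shift (χ l) (fun b => κ (n+1) n (χ l) b)]
      rw [sum_row hm hnsA (by omega) (by omega) (by omega) (by omega)]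
    rw [peel2, peel1, hIH]
    rw [show 2*n-1 = (2*n-3) + 2 from by omega, pow_add]
    ring

include hm hpos hnsA hnsB in
lemma Vup {j : ℕ} (hj2 : 2 ≤ j) (hjm : j ≤ m)
    (χ : (Fin (2*m-2) → ZMod d) → ZMod d) (W : (Fin (2*m-2) → ZMod d) → ℝ)
    (hχ : ∀ l (p : Fin (2*m-2)) v, (p:ℕ) < 2*j-2 → χ (Function.update l p v) = χ l)
    (hW : ∀ l (p : Fin (2*m-2)) v, (p:ℕ) < 2*j-2 → W (Function.update l p v) = W l) :
    ∑ l : Fin (2*m-2) → ZMod d, margB d κ j (χ l) * W l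
      = (d:ℝ)^(2*j-2) * ∑ l : Fin (2*m-2) → ZMod d,
          FFun d m κ l j (χ l + qOf d m l (2*j-1) + cOf d m l j) * W l := by
  have hd0 : (Fintype.card (ZMod d) : ℝ) = (d:ℝ) := by rw [ZMod.card]
  set w : (Fin (2*m-2) → ZMod d) → ZMod d := fun l => χ l + qOf d m l (2*j-1) with hwdef
  set W' : (Fin (2*m-2) → ZMod d) → ℝ := fun l =>
    (κ j j (w l) (χ l) / margA d κ j (w l)) * W l with hW'def
  have hwinv : ∀ l (p : Fin (2*m-2)) v, (p:ℕ) < 2*j-3 →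
      w (Function.update l p v) = w l := by
    intro l p v hp
    rw [hwdef]
    simp only []
    rw [hχ l p v (by omega), qOf_update_ne (by omega)]
  have hW'inv : ∀ l (p : Fin (2*m-2)) v, (p:ℕ) < 2*j-3 →
      W' (Function.update l p v) = W' l := by
    intro l p v hp
    rw [hW'def]
    simp only []
    rw [hχ l p v (by omega), hW l p v (by omega), hwinv l p v hp]
  have claimB : ∀ l : Fin (2*m-2) → ZMod d,
      FFun d m κ l j (χ l + qOf d m l (2*j-1) + cOf d m l j) * W l
      = FFun d m κ l (j-1) (w l + cOf d m l j) *
          (κ j (j-1) (w l) (w l + qOf d m l (2*j-2)) /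
            margB d κ (j-1) (w l + qOf d m l (2*j-2))) * W' l := by
    intro l
    have h1 : χ l + qOf d m l (2*j-1) + cOf d m l j = w l + cOf d m l j := by
      rw [hwdef]
    have h2 : χ l + qOf d m l (2*j-1) + cOf d m l j - cOf d m l j = w l := by
      rw [h1]; ring
    have h3 : w l - qOf d m l (2*j-1) = χ l := by rw [hwdef]; simp only []; ring
    rw [FFun_peel_top (k := j) hj2, h2,
      gFun_eq hm hpos hnsA hnsB hj2 hjm, h3, h1, hW'def]
    ring
  have hU := Uup hm hpos hnsA hnsB j hj2 hjm w W' hwinv hW'inv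
  rw [← Finset.sum_congr rfl (fun l _ => claimB l)] at hU
  have hΨ : ∀ l : Fin (2*m-2) → ZMod d, margA d κ j (w l) * W' l
      = κ j j (w l) (χ l) * W l := by
    intro l
    rw [hW'def]
    simp only []
    rw [← mul_assoc, margA_cancel hm hpos hnsA hj2 hjm (by omega) hjm]
  rw [Finset.sum_congr rfl (fun l _ => hΨ l)] at hU
  have peel1 : ∑ l : Fin (2*m-2) → ZMod d, margB d κ j (χ l) * W l
      = (d:ℝ) * ∑ l : Fin (2*m-2) → ZMod d, κ j j (w l) (χ l) * W l := by
    rw [← hd0]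
    refine peel ⟨2*j-3, by omega⟩ _ _ (fun l => ?_)
    have e : ∀ v : ZMod d,
        κ j j (w (Function.update l ⟨2*j-3, by omega⟩ v))
            (χ (Function.update l ⟨2*j-3, by omega⟩ v)) *
          W (Function.update l ⟨2*j-3, by omega⟩ v)
        = κ j j (χ l + v) (χ l) * W l := by
      intro v
      have hwv : w (Function.update l ⟨2*j-3, by omega⟩ v) = χ l + v := by
        rw [hwdef]
        simp only []
        rw [hχ l _ v (by simp only [Fin.val_mk]; try omega),
          qOf_update_self (by simp only [Fin.val_mk]; try omega)]
      rw [hwv, hχ l _ v (by simp only [Fin.val_mk]; try omega),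
        hW l _ v (by simp only [Fin.val_mk]; try omega)]
    rw [Finset.sum_congr rfl (fun v _ => e v), ← Finset.sum_mul]
    rw [sum_shift (χ l) (fun a => κ j j a (χ l))]
    rw [sum_col hm hnsB hj2 hjm (by omega) hjm]
  rw [peel1, hU, show 2*j-2 = (2*j-3)+1 from by omega, pow_succ]
  ring

lemma sum_const_L (c : ℝ) :
    ∑ _l : Fin (2*m-2) → ZMod d, c = (d:ℝ)^(2*m-2) * c := by
  rw [Finset.sum_const, Finset.card_univ, Fintype.card_fun, ZMod.card, Fintype.card_fin,
    nsmul_eq_mul]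
  push_cast
  ring

include hm hpos hnsA hnsB in
lemma mainC {i : ℕ} (hi2 : 2 ≤ i) (him : i ≤ m) (a b : ZMod d) {p : Fin (2*m-2)}
    (hp : (p:ℕ) = 2*i-3) :
    ∑ l : Fin (2*m-2) → ZMod d,
      (if l p = a - b then FFun d m κ l m (a + cOf d m l i) else 0) = κ i i a b := by
  have hd0 : (Fintype.card (ZMod d) : ℝ) = (d:ℝ) := by rw [ZMod.card]
  have hdne : (d:ℝ) ≠ 0 := Nat.cast_ne_zero.2 (NeZero.ne d)
  set S : ℝ := ∑ l : Fin (2*m-2) → ZMod d,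
      (if l p = a - b then FFun d m κ l m (a + cOf d m l i) else 0) with hS
  have hind := ind_peel p (a - b) (fun l => FFun d m κ l m (a + cOf d m l i))
  rw [hd0] at hind
  beta_reduce at hind
  have hcOf : ∀ (l : Fin (2*m-2) → ZMod d) (w : ZMod d),
      cOf d m (Function.update l p w) i = cOf d m l i :=
    fun l w => cOf_update_ne (fun k hk1 hk2 => by omega) l w
  rw [Finset.sum_congr rfl (fun l _ =>
    congrArg (fun c => FFun d m κ (Function.update l p (a - b)) m (a + c)) (hcOf l _))]
    at hind
  have hHd := Hdown hm hpos hnsA hnsB hi2 (fun l => a + cOf d m l i)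
    (fun l => Function.update l p (a - b)) (fun _ => (1:ℝ))
    (fun l p' w hp' => Function.update_comm (fun hc => by rw [hc] at hp'; omega) _ _ _)
    (fun l p' w hp' => by
      rw [cOf_update_ne (fun k hk1 hk2 => by omega)])
    (fun _ _ _ _ => rfl) m him le_rfl
  simp only [mul_one] at hHd
  have hexp : ∀ l : Fin (2*m-2) → ZMod d,
      FFun d m κ (Function.update l p (a - b)) i (a + cOf d m l i)
        = FFun d m κ l (i-1) (a + cOf d m l i) *
            (κ i (i-1) a (a + qOf d m l (2*i-2)) /
              margB d κ (i-1) (a + qOf d m l (2*i-2))) *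
            (κ i i a b / margA d κ i a) := by
    intro l
    rw [FFun_peel_top (k := i) hi2, FFun_update (by omega) (by omega), hcOf,
      show a + cOf d m l i - cOf d m l i = a from by ring,
      gFun_eq hm hpos hnsA hnsB hi2 him,
      qOf_update_ne (i := 2*i-2) (by omega), qOf_update_self (i := 2*i-1) (by omega),
      show a - (a - b) = b from by ring]
    ring
  have hU := Uup hm hpos hnsA hnsB i hi2 him (fun _ => a)
    (fun _ => κ i i a b / margA d κ i a) (fun _ _ _ _ => rfl) (fun _ _ _ _ => rfl)
  rw [Finset.sum_congr rfl (fun l _ =>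
      margA_cancel hm hpos hnsA hi2 him (by omega) him a b),
    sum_const_L] at hU
  rw [← Finset.sum_congr rfl (fun l _ => hexp l)] at hU
  rw [hHd, hind] at hU
  have key : ((d:ℝ)^(2*m-2)) * κ i i a b = ((d:ℝ)^(2*m-2)) * S := by
    rw [hU, show (d:ℝ)^(2*m-2) = (d:ℝ)^(2*i-3) * (d:ℝ)^(2*(m-i)) * (d:ℝ)^1 from by
      rw [← pow_add, ← pow_add]; congr 1; omega]
    ring
  exact (mul_left_cancel₀ (pow_ne_zero _ hdne) key).symm

include hm hpos hnsA hnsB in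
lemma mainD {i : ℕ} (hi2 : 2 ≤ i) (him : i ≤ m) (a b : ZMod d) {p : Fin (2*m-2)}
    (hp : (p:ℕ) = 2*i-4) :
    ∑ l : Fin (2*m-2) → ZMod d,
      (if l p = b - a then FFun d m κ l m (a + cOf d m l i) else 0) = κ i (i-1) a b := by
  have hd0 : (Fintype.card (ZMod d) : ℝ) = (d:ℝ) := by rw [ZMod.card]
  have hdne : (d:ℝ) ≠ 0 := Nat.cast_ne_zero.2 (NeZero.ne d)
  set S : ℝ := ∑ l : Fin (2*m-2) → ZMod d,
      (if l p = b - a then FFun d m κ l m (a + cOf d m l i) else 0) with hS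
  have hind := ind_peel p (b - a) (fun l => FFun d m κ l m (a + cOf d m l i))
  rw [hd0] at hind
  beta_reduce at hind
  rcases eq_or_lt_of_le hi2 with hi2' | hi3
  · -- case i = 2
    subst hi2'
    have hp0 : (p:ℕ) = 0 := by omega
    rw [Finset.sum_congr rfl (fun l _ => by rw [cOf_two, add_zero])] at hind
    have hHd := Hdown hm hpos hnsA hnsB le_rfl (fun _ => a)
      (fun l => Function.update l p (b - a)) (fun _ => (1:ℝ))
      (fun l p' w hp' => Function.update_comm (fun hc => by rw [hc] at hp'; omega) _ _ _)
      (fun _ _ _ _ => rfl) (fun _ _ _ _ => rfl) m him le_rfl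
    simp only [mul_one] at hHd
    have hp1lt : 1 < 2*m-2 := by omega
    have peel1 : ∑ l : Fin (2*m-2) → ZMod d, κ 2 1 a b
        = (d:ℝ) * ∑ l : Fin (2*m-2) → ZMod d,
            FFun d m κ (Function.update l p (b - a)) 2 a := by
      rw [← hd0]
      refine peel ⟨1, hp1lt⟩ _ _ (fun l => ?_)
      have e : ∀ v : ZMod d,
          FFun d m κ (Function.update (Function.update l ⟨1, hp1lt⟩ v) p (b - a)) 2 a
          = (margB d κ 1 b * κ 2 1 a b / (margB d κ 1 b * margA d κ 2 a)) *
              κ 2 2 a (a - v) := by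
        intro v
        have hcomm : Function.update (Function.update l ⟨1, hp1lt⟩ v) p (b - a)
            = Function.update (Function.update l p (b - a)) ⟨1, hp1lt⟩ v :=
          Function.update_comm (fun hc => by
            have := congrArg Fin.val hc
            simp only [Fin.val_mk] at this
            omega) _ _ _
        rw [hcomm]
        have hq2 : qOf d m (Function.update (Function.update l p (b - a)) ⟨1, hp1lt⟩ v) 2
            = b - a := by
          rw [qOf_update_ne (by simp only [Fin.val_mk]; try omega)]
          exact qOf_update_self (by omega) _ _
        have hq3 : qOf d m (Function.update (Function.update l p (b - a)) ⟨1, hp1lt⟩ v) 3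
            = v := qOf_update_self (by simp only [Fin.val_mk]; try omega) _ _
        rw [FFun_peel_top (k := 2) le_rfl, FFun_one, cOf_two, sub_zero,
          gFun_eq hm hpos hnsA hnsB le_rfl hm,
          show (2:ℕ)*2-2 = 2 from by norm_num, show (2:ℕ)*2-1 = 3 from by norm_num,
          hq2, hq3, show a + (b - a) = b from by ring]
        ring
      rw [Finset.sum_congr rfl (fun v _ => e v), ← Finset.mul_sum]
      rw [sum_shift_sub a (fun c => κ 2 2 a c)]
      rw [sum_row hm hnsA le_rfl hm (by omega) hm]
      by_cases hB : margB d κ 1 b = 0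
      · rw [hB, col_zero hm hpos hnsB le_rfl hm le_rfl (by omega) hB a]
        simp
      · by_cases hA : margA d κ 2 a = 0
        · rw [hA, row_zero hm hpos hnsA le_rfl hm le_rfl (by omega) hA b]
          simp
        · field_simp
    rw [sum_const_L, hHd, hind] at peel1
    have key : ((d:ℝ)^(2*m-2)) * κ 2 1 a b = ((d:ℝ)^(2*m-2)) * S := by
      rw [peel1, show (d:ℝ)^(2*m-2) = (d:ℝ)^1 * (d:ℝ)^(2*(m-2)) * (d:ℝ)^1 from by
        rw [← pow_add, ← pow_add]; congr 1; omega]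
      ring
    exact (mul_left_cancel₀ (pow_ne_zero _ hdne) key).symm
  · -- case 3 ≤ i
    have hi3' : 3 ≤ i := hi3
    have hplt : (2*i-3) < 2*m-2 := by omega
    have hχeq : ∀ (l : Fin (2*m-2) → ZMod d) (w : ZMod d),
        cOf d m (Function.update l p w) i
          = cOf d m l (i-1) + qOf d m l (2*i-3) + w := by
      intro l w
      rw [cOf_split (by omega), cOf_update_ne (fun k hk1 hk2 => by omega),
        qOf_update_ne (by omega), qOf_update_self (by omega)]
    have hHd := Hdown hm hpos hnsA hnsB hi2
      (fun l => a + cOf d m (Function.update l p (b - a)) i)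
      (fun l => Function.update l p (b - a)) (fun _ => (1:ℝ))
      (fun l p' w hp' => Function.update_comm (fun hc => by rw [hc] at hp'; omega) _ _ _)
      (fun l p' w hp' => by
        rw [Function.update_comm (fun hc => by rw [hc] at hp'; omega),
          cOf_update_ne (p := p') (fun k hk1 hk2 => by omega)])
      (fun _ _ _ _ => rfl) m him le_rfl
    simp only [mul_one] at hHd
    have peel1 : ∑ l : Fin (2*m-2) → ZMod d,
        FFun d m κ l (i-1) (b + qOf d m l (2*i-3) + cOf d m l (i-1)) *
          (κ i (i-1) a b / margB d κ (i-1) b)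
        = (d:ℝ) * ∑ l : Fin (2*m-2) → ZMod d,
            FFun d m κ (Function.update l p (b - a)) i
              (a + cOf d m (Function.update l p (b - a)) i) := by
      rw [← hd0]
      refine peel ⟨2*i-3, hplt⟩ _ _ (fun l => ?_)
      have e : ∀ v : ZMod d,
          FFun d m κ (Function.update (Function.update l ⟨2*i-3, hplt⟩ v) p (b - a)) i
            (a + cOf d m (Function.update (Function.update l ⟨2*i-3, hplt⟩ v) p (b - a)) i)
          = FFun d m κ l (i-1) (b + qOf d m l (2*i-3) + cOf d m l (i-1)) *
              (κ i (i-1) a b / (margB d κ (i-1) b * margA d κ i a)) *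
              κ i i a (a - v) := by
        intro v
        have hne : (⟨2*i-3, hplt⟩ : Fin (2*m-2)) ≠ p := by
          intro hc
          have := congrArg Fin.val hc
          simp only [Fin.val_mk] at this
          omega
        have hc1 : cOf d m (Function.update (Function.update l ⟨2*i-3, hplt⟩ v) p (b - a)) i
            = cOf d m l (i-1) + qOf d m l (2*i-3) + (b - a) := by
          rw [hχeq, cOf_update_ne (fun k hk1 hk2 => by
              simp only [Fin.val_mk]; try omega),
            qOf_update_ne (by simp only [Fin.val_mk]; try omega)]
        have harg : a + (cOf d m l (i-1) + qOf d m l (2*i-3) + (b - a))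
            = b + qOf d m l (2*i-3) + cOf d m l (i-1) := by ring
        have hq1 : qOf d m (Function.update (Function.update l ⟨2*i-3, hplt⟩ v) p (b - a))
            (2*i-2) = b - a := qOf_update_self (by omega) _ _
        have hq2 : qOf d m (Function.update (Function.update l ⟨2*i-3, hplt⟩ v) p (b - a))
            (2*i-1) = v := by
          rw [qOf_update_ne (by omega)]
          exact qOf_update_self (by simp only [Fin.val_mk]; try omega) _ _
        rw [FFun_peel_top (k := i) hi2, hc1, harg,
          show b + qOf d m l (2*i-3) + cOf d m l (i-1)
              - (cOf d m l (i-1) + qOf d m l (2*i-3) + (b - a)) = a from by ring,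
          FFun_update (by omega) (by omega), FFun_update (by simp only [Fin.val_mk]; try omega)
            (by simp only [Fin.val_mk]; try omega),
          gFun_eq hm hpos hnsA hnsB hi2 him, hq1, hq2,
          show a + (b - a) = b from by ring]
        ring
      rw [Finset.sum_congr rfl (fun v _ => e v), ← Finset.mul_sum]
      rw [sum_shift_sub a (fun c => κ i i a c)]
      rw [sum_row hm hnsA hi2 him (by omega) him]
      by_cases hB : margB d κ (i-1) b = 0
      · rw [hB, col_zero hm hpos hnsB hi2 him (by omega) (by omega) hB a]
        simp
      · by_cases hA : margA d κ i a = 0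
        · rw [hA, row_zero hm hpos hnsA hi2 him (by omega) (by omega) hA b]
          simp
        · field_simp
    have hV := Vup hm hpos hnsA hnsB (j := i-1) (by omega) (by omega) (fun _ => b)
      (fun _ => κ i (i-1) a b / margB d κ (i-1) b) (fun _ _ _ _ => rfl) (fun _ _ _ _ => rfl)
    rw [show 2*(i-1)-1 = 2*i-3 from by omega, show 2*(i-1)-2 = 2*i-4 from by omega] at hV
    rw [Finset.sum_congr rfl (fun l _ =>
        margB_cancel hm hpos hnsB hi2 him (by omega) (by omega) a b),
      sum_const_L] at hV
    rw [peel1, hHd, hind] at hV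
    have key : ((d:ℝ)^(2*m-2)) * κ i (i-1) a b = ((d:ℝ)^(2*m-2)) * S := by
      rw [hV, show (d:ℝ)^(2*m-2)
          = (d:ℝ)^(2*i-4) * (d:ℝ)^1 * (d:ℝ)^(2*(m-i)) * (d:ℝ)^1 from by
        rw [← pow_add, ← pow_add, ← pow_add]; congr 1; omega]
      ring
    exact (mul_left_cancel₀ (pow_ne_zero _ hdne) key).symm

include hm hpos hnorm hnsA hnsB in
lemma f_sum_one :
    ∑ l : Fin (2*m-2) → ZMod d, ∑ t : ZMod d, FFun d m κ l m t = 1 := by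
  have hmlt : 2*m-3 < 2*m-2 := by omega
  calc ∑ l : Fin (2*m-2) → ZMod d, ∑ t : ZMod d, FFun d m κ l m t
      = ∑ l : Fin (2*m-2) → ZMod d, ∑ t : ZMod d, FFun d m κ l m (t + cOf d m l m) := by
        refine Finset.sum_congr rfl (fun l _ => ?_)
        rw [sum_shift_r (cOf d m l m) (fun t => FFun d m κ l m t)]
    _ = ∑ t : ZMod d, ∑ l : Fin (2*m-2) → ZMod d, FFun d m κ l m (t + cOf d m l m) :=
        Finset.sum_comm
    _ = ∑ t : ZMod d, ∑ v : ZMod d, ∑ l : Fin (2*m-2) → ZMod d,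
          (if l ⟨2*m-3, hmlt⟩ = v then FFun d m κ l m (t + cOf d m l m) else 0) := by
        refine Finset.sum_congr rfl (fun t _ => ?_)
        rw [Finset.sum_comm]
        refine Finset.sum_congr rfl (fun l _ => ?_)
        simp
    _ = ∑ t : ZMod d, ∑ v : ZMod d, κ m m t (t - v) := by
        refine Finset.sum_congr rfl (fun t _ => Finset.sum_congr rfl (fun v _ => ?_))
        have hC := mainC hm hpos hnsA hnsB hm le_rfl t (t - v)
          (p := ⟨2*m-3, hmlt⟩) (by simp only [Fin.val_mk])
        rw [show t - (t - v) = v from by ring] at hC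
        exact hC
    _ = ∑ t : ZMod d, ∑ b : ZMod d, κ m m t b := by
        refine Finset.sum_congr rfl (fun t _ => ?_)
        rw [sum_shift_sub t (fun b => κ m m t b)]
    _ = 1 := hnorm m m hm le_rfl (by omega) le_rfl
end basics


/-- every no-signaling behavior `κ ∈ NS(d,d,m-1,m)` admits a convex
decomposition of its chain-relevant probabilities: with weights `f(l) = Σ_t 𝓕^m_l(t)`
(nonnegative, summing to 1) there are valid behaviors `F_l` concentrated on outcome
pairs with fixed differences given by `l` such that
`κ(·,·|i,i) = Σ_l f(l) F_l(·,·|i,i)` and `κ(·,·|i,i-1) = Σ_l f(l) F_l(·,·|i,i-1)`. -/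
theorem ns_behavior_chain_decomposition
    (d m : ℕ) [NeZero d] (hd : 2 ≤ d) (hm : 2 ≤ m)
    (κ : ℕ → ℕ → ZMod d → ZMod d → ℝ)
    (hpos : ∀ x y, 2 ≤ x → x ≤ m → 1 ≤ y → y ≤ m → ∀ a b, 0 ≤ κ x y a b)
    (hnorm : ∀ x y, 2 ≤ x → x ≤ m → 1 ≤ y → y ≤ m →
      ∑ a : ZMod d, ∑ b : ZMod d, κ x y a b = 1)
    (hnsA : ∀ x y y', 2 ≤ x → x ≤ m → 1 ≤ y → y ≤ m → 1 ≤ y' → y' ≤ m → ∀ a,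
      ∑ b : ZMod d, κ x y a b = ∑ b : ZMod d, κ x y' a b)
    (hnsB : ∀ x x' y, 2 ≤ x → x ≤ m → 2 ≤ x' → x' ≤ m → 1 ≤ y → y ≤ m → ∀ b,
      ∑ a : ZMod d, κ x y a b = ∑ a : ZMod d, κ x' y a b) :
    ∃ F : (Fin (2 * m - 2) → ZMod d) → ℕ → ℕ → ZMod d → ZMod d → ℝ,
      (∀ l : Fin (2 * m - 2) → ZMod d, 0 ≤ ∑ t : ZMod d, FFun d m κ l m t) ∧
      (∑ l : Fin (2 * m - 2) → ZMod d, ∑ t : ZMod d, FFun d m κ l m t = 1) ∧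
      (∀ l x y, 2 ≤ x → x ≤ m → 1 ≤ y → y ≤ m →
        (∀ a b, 0 ≤ F l x y a b) ∧ ∑ a : ZMod d, ∑ b : ZMod d, F l x y a b = 1) ∧
      (∀ l i, 2 ≤ i → i ≤ m → ∀ a b : ZMod d,
        a - b ≠ qOf d m l (2 * i - 1) → F l i i a b = 0) ∧
      (∀ l i, 2 ≤ i → i ≤ m → ∀ a b : ZMod d,
        b - a ≠ qOf d m l (2 * i - 2) → F l i (i - 1) a b = 0) ∧
      (∀ i, 2 ≤ i → i ≤ m → ∀ a b : ZMod d,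
        κ i i a b =
          ∑ l : Fin (2 * m - 2) → ZMod d, (∑ t : ZMod d, FFun d m κ l m t) * F l i i a b ∧
        κ i (i - 1) a b =
          ∑ l : Fin (2 * m - 2) → ZMod d,
            (∑ t : ZMod d, FFun d m κ l m t) * F l i (i - 1) a b) := by


  classical
  have hdne : (d:ℝ) ≠ 0 := Nat.cast_ne_zero.2 (NeZero.ne d)
  have hFFnn : ∀ (l : Fin (2*m-2) → ZMod d) t, 0 ≤ FFun d m κ l m t :=
    fun l t => FFun_nonneg hm hpos le_rfl l t
  have hfnn : ∀ l : Fin (2*m-2) → ZMod d, 0 ≤ ∑ t : ZMod d, FFun d m κ l m t :=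
    fun l => Finset.sum_nonneg (fun t _ => hFFnn l t)
  have hzero : ∀ l : Fin (2*m-2) → ZMod d, (∑ t : ZMod d, FFun d m κ l m t) = 0 →
      ∀ t, FFun d m κ l m t = 0 := by
    intro l hf t
    exact (Finset.sum_eq_zero_iff_of_nonneg (fun t _ => hFFnn l t)).mp hf t (Finset.mem_univ t)
  refine ⟨fun l x y a b =>
    if x = y then
      (if a - b = qOf d m l (2*x-1) then
        (if (∑ t : ZMod d, FFun d m κ l m t) = 0 then ((d:ℝ))⁻¹
         else FFun d m κ l m (a + cOf d m l x) / (∑ t : ZMod d, FFun d m κ l m t))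
       else 0)
    else if y + 1 = x then
      (if b - a = qOf d m l (2*x-2) then
        (if (∑ t : ZMod d, FFun d m κ l m t) = 0 then ((d:ℝ))⁻¹
         else FFun d m κ l m (a + cOf d m l x) / (∑ t : ZMod d, FFun d m κ l m t))
       else 0)
    else ((d:ℝ)^2)⁻¹, hfnn, f_sum_one hm hpos hnorm hnsA hnsB, ?_, ?_, ?_, ?_⟩
  · -- validity
    intro l x y hx2 hxm hy1 hym
    have wnn : ∀ a : ZMod d, 0 ≤ (if (∑ t : ZMod d, FFun d m κ l m t) = 0 then ((d:ℝ))⁻¹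
        else FFun d m κ l m (a + cOf d m l x) / (∑ t : ZMod d, FFun d m κ l m t)) := by
      intro a
      split_ifs with hf
      · positivity
      · exact div_nonneg (hFFnn l _) (hfnn l)
    have wsum : ∑ a : ZMod d, (if (∑ t : ZMod d, FFun d m κ l m t) = 0 then ((d:ℝ))⁻¹
        else FFun d m κ l m (a + cOf d m l x) / (∑ t : ZMod d, FFun d m κ l m t)) = 1 := by
      by_cases hf : (∑ t : ZMod d, FFun d m κ l m t) = 0
      · simp only [if_pos hf]
        rw [Finset.sum_const, Finset.card_univ, ZMod.card, nsmul_eq_mul]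
        field_simp
      · simp only [if_neg hf]
        rw [← Finset.sum_div, sum_shift_r (cOf d m l x) (fun t => FFun d m κ l m t),
          div_self hf]
    constructor
    · intro a b
      dsimp only
      split_ifs with h1 h2 h3 h4 h5
      · positivity
      · exact div_nonneg (hFFnn l _) (hfnn l)
      · exact le_rfl
      · positivity
      · exact div_nonneg (hFFnn l _) (hfnn l)
      · exact le_rfl
      · positivity
    · by_cases hxy : x = y
      · simp only [if_pos hxy]
        set w : ZMod d → ℝ := fun a =>
          (if (∑ t : ZMod d, FFun d m κ l m t) = 0 then ((d:ℝ))⁻¹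
           else FFun d m κ l m (a + cOf d m l x) / (∑ t : ZMod d, FFun d m κ l m t)) with hwd
        have hinner : ∀ a : ZMod d,
            ∑ b : ZMod d, (if a - b = qOf d m l (2*x-1) then w a else 0) = w a := by
          intro a
          have hc : ∀ b : ZMod d, (if a - b = qOf d m l (2*x-1) then w a else 0)
              = (if b = a - qOf d m l (2*x-1) then w a else 0) := by
            intro b
            by_cases hb : b = a - qOf d m l (2*x-1)
            · rw [if_pos (by rw [hb]; ring), if_pos hb]
            · rw [if_neg (fun h => hb (by rw [← h]; ring)), if_neg hb]
          rw [Finset.sum_congr rfl (fun b _ => hc b), Finset.sum_ite_eq' Finset.univ]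
          simp
        rw [Finset.sum_congr rfl (fun a _ => hinner a)]
        exact wsum
      · simp only [if_neg hxy]
        by_cases hyx : y + 1 = x
        · simp only [if_pos hyx]
          set w : ZMod d → ℝ := fun a =>
            (if (∑ t : ZMod d, FFun d m κ l m t) = 0 then ((d:ℝ))⁻¹
             else FFun d m κ l m (a + cOf d m l x) / (∑ t : ZMod d, FFun d m κ l m t)) with hwd
          have hinner : ∀ a : ZMod d,
              ∑ b : ZMod d, (if b - a = qOf d m l (2*x-2) then w a else 0) = w a := by
            intro a
            have hc : ∀ b : ZMod d, (if b - a = qOf d m l (2*x-2) then w a else 0)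
                = (if b = qOf d m l (2*x-2) + a then w a else 0) := by
              intro b
              by_cases hb : b = qOf d m l (2*x-2) + a
              · rw [if_pos (by rw [hb]; ring), if_pos hb]
              · rw [if_neg (fun h => hb (by rw [← h]; ring)), if_neg hb]
            rw [Finset.sum_congr rfl (fun b _ => hc b), Finset.sum_ite_eq' Finset.univ]
            simp
          rw [Finset.sum_congr rfl (fun a _ => hinner a)]
          exact wsum
        · simp only [if_neg hyx]
          have hrow : ∀ a : ZMod d, ∑ _b : ZMod d, ((d:ℝ)^2)⁻¹ = (d:ℝ) * ((d:ℝ)^2)⁻¹ := by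
            intro a
            rw [Finset.sum_const, Finset.card_univ, ZMod.card, nsmul_eq_mul]
          rw [Finset.sum_congr rfl (fun a _ => hrow a), Finset.sum_const, Finset.card_univ,
            ZMod.card, nsmul_eq_mul]
          field_simp
  · -- support (i,i)
    intro l i hi2 him a b hab
    simp [hab]
  · -- support (i,i-1)
    intro l i hi2 him a b hab
    have h1 : ¬ (i = i - 1) := by omega
    have h2 : i - 1 + 1 = i := by omega
    simp [h1, h2, hab]
  · -- decomposition
    intro i hi2 him a b
    have hplt1 : 2*i-3 < 2*m-2 := by omega
    have hplt2 : 2*i-4 < 2*m-2 := by omega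
    have hq1 : ∀ l : Fin (2*m-2) → ZMod d, qOf d m l (2*i-1) = l ⟨2*i-3, hplt1⟩ := by
      intro l
      unfold qOf
      rw [dif_pos (by omega : 2*i-1-2 < 2*m-2)]
      congr 1
      all_goals first | omega | exact Fin.ext (by omega)
    have hq2 : ∀ l : Fin (2*m-2) → ZMod d, qOf d m l (2*i-2) = l ⟨2*i-4, hplt2⟩ := by
      intro l
      unfold qOf
      rw [dif_pos (by omega : 2*i-2-2 < 2*m-2)]
      congr 1
      all_goals first | omega | exact Fin.ext (by omega)
    constructor
    · rw [← mainC hm hpos hnsA hnsB hi2 him a b (p := ⟨2*i-3, hplt1⟩) (by simp only [Fin.val_mk])]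
      refine Finset.sum_congr rfl (fun l _ => ?_)
      beta_reduce
      rw [if_pos (rfl : i = i)]
      by_cases hc : a - b = qOf d m l (2*i-1)
      · rw [if_pos hc, if_pos (show l ⟨2*i-3, hplt1⟩ = a - b from by rw [← hq1 l, ← hc])]
        by_cases hf : (∑ t : ZMod d, FFun d m κ l m t) = 0
        · rw [if_pos hf, hf, zero_mul]
          exact hzero l hf _
        · rw [if_neg hf, mul_comm (∑ t : ZMod d, FFun d m κ l m t) _, div_mul_cancel₀ _ hf]
      · rw [if_neg hc,
          if_neg (show ¬ l ⟨2*i-3, hplt1⟩ = a - b from fun h => hc (by rw [hq1 l, h])),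
          mul_zero]
    · rw [← mainD hm hpos hnsA hnsB hi2 him a b (p := ⟨2*i-4, hplt2⟩) (by simp only [Fin.val_mk])]
      refine Finset.sum_congr rfl (fun l _ => ?_)
      have h1 : ¬ (i = i - 1) := by omega
      have h2 : i - 1 + 1 = i := by omega
      beta_reduce
      rw [if_neg h1, if_pos h2]
      by_cases hc : b - a = qOf d m l (2*i-2)
      · rw [if_pos hc, if_pos (show l ⟨2*i-4, hplt2⟩ = b - a from by rw [← hq2 l, ← hc])]
        by_cases hf : (∑ t : ZMod d, FFun d m κ l m t) = 0
        · rw [if_pos hf, hf, zero_mul]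
          exact hzero l hf _
        · rw [if_neg hf, mul_comm (∑ t : ZMod d, FFun d m κ l m t) _, div_mul_cancel₀ _ hf]
      · rw [if_neg hc,
          if_neg (show ¬ l ⟨2*i-4, hplt2⟩ = b - a from fun h => hc (by rw [hq2 l, h])),
          mul_zero]
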